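/- arXiv:2210.06185 — 2 statements merged into one kernel-verified Lean document; each statement's English description precedes it below -/
import Mathlib

section
/- Let M ≥ 2 be an integer and let c > 0 be a constant such that |𝑃_M| ≥ c·M/log M, where 𝑃_M is the set of primes p with ⌈M/2⌉ < p ≤ M. Let d ≥ 1 and let k = (k_1,…,k_d) ∈ ℤ^d \ {0}. Writing N_T = Σ_{p∈𝑃_M} p^2, the composite exponential sum satisfies |(1/N_T) · Σ_{p∈𝑃_M} Σ_{n=0}^{p^2−1} exp(2πi (k_1 n + … + k_d n^d)/p^2)| ≤ 4(d−1)/M + 4·log|k|_∞/(c·M), where |k|_∞ = max_{1≤j≤d} |k_j|. -/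
/-- `𝑃_M`: the set of primes `p` with `⌈M/2⌉ < p ≤ M` (note `⌈M/2⌉ = (M+1)/2` in `ℕ`). -/
def primesInDyadic (M : ℕ) : Finset ℕ :=
  (Finset.range (M + 1)).filter fun p => Nat.Prime p ∧ (M + 1) / 2 < p

private def Fpoly (d : ℕ) (k : Fin d → ℤ) (x : ℤ) : ℤ := ∑ j : Fin d, k j * x ^ ((j : ℕ) + 1)
private def Fder (d : ℕ) (k : Fin d → ℤ) (x : ℤ) : ℤ := ∑ j : Fin d, ((j : ℕ) + 1) * k j * x ^ (j : ℕ)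

private lemma binom_aux (a c : ℤ) (m : ℕ) :
    c ^ 2 ∣ (a + c) ^ (m + 1) - (a ^ (m + 1) + (m + 1) * a ^ m * c) := by
  induction m with
  | zero => ring_nf; simp
  | succ m ih =>
    obtain ⟨t, ht⟩ := ih
    refine ⟨t * (a + c) + (m + 1) * a ^ m, ?_⟩
    push_cast
    linear_combination (a + c) * ht

private lemma Fshift (d : ℕ) (k : Fin d → ℤ) (p b a : ℤ) :
    (p ^ 2 : ℤ) ∣ Fpoly d k (a + p * b) - (Fpoly d k a + Fder d k a * (p * b)) := by
  have : Fpoly d k (a + p * b) - (Fpoly d k a + Fder d k a * (p * b))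
      = ∑ j : Fin d, k j * ((a + p * b) ^ ((j : ℕ) + 1)
          - (a ^ ((j : ℕ) + 1) + ((j : ℕ) + 1) * a ^ (j : ℕ) * (p * b))) := by
    simp only [Fpoly, Fder, Finset.sum_mul, ← Finset.sum_sub_distrib, ← Finset.sum_add_distrib]
    congr 1; funext j; push_cast; ring
  rw [this]
  refine Finset.dvd_sum fun j _ => ?_
  have h1 := binom_aux a (p * b) (j : ℕ)
  have h2 : (p ^ 2 : ℤ) ∣ (p * b) ^ 2 := ⟨b ^ 2, by ring⟩
  exact Dvd.dvd.mul_left (h2.trans h1) _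

private lemma rootcount (d : ℕ) (k : Fin d → ℤ) (p : ℕ) (hp : p.Prime)
    (hgood : ∃ j : Fin d, ¬ ((p : ℤ) ∣ ((j : ℕ) + 1) * k j)) :
    ((Finset.range p).filter (fun a : ℕ => (p : ℤ) ∣ Fder d k (a : ℤ))).card ≤ d - 1 := by
  haveI : Fact p.Prime := ⟨hp⟩
  obtain ⟨j0, hj0⟩ := hgood
  set g : Polynomial (ZMod p) :=
    ∑ j : Fin d, Polynomial.C ((((j : ℕ) + 1) * k j : ℤ) : ZMod p) * Polynomial.X ^ (j : ℕ) with hg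
  have hcoeff : ∀ m : ℕ, g.coeff m
      = ∑ j : Fin d, if (j : ℕ) = m then ((((j : ℕ) + 1) * k j : ℤ) : ZMod p) else 0 := by
    intro m
    rw [hg, Polynomial.finset_sum_coeff]
    congr 1; funext j
    rw [Polynomial.coeff_C_mul, Polynomial.coeff_X_pow]
    simp only [mul_ite, mul_one, mul_zero]
    exact if_congr eq_comm rfl rfl
  have hgne : g ≠ 0 := by
    intro h0
    have h1 : g.coeff (j0 : ℕ) = ((((j0 : ℕ) + 1) * k j0 : ℤ) : ZMod p) := by
      rw [hcoeff]
      rw [Finset.sum_eq_single j0]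
      · simp
      · intro j _ hne
        have : (j : ℕ) ≠ (j0 : ℕ) := fun h => hne (Fin.ext h)
        simp [this]
      · simp
    rw [h0] at h1
    simp only [Polynomial.coeff_zero] at h1
    exact hj0 ((ZMod.intCast_zmod_eq_zero_iff_dvd _ _).mp h1.symm)
  have hdeg : g.natDegree ≤ d - 1 := by
    refine Polynomial.natDegree_sum_le_of_forall_le _ _ fun j _ => ?_
    refine le_trans (Polynomial.natDegree_C_mul_le _ _) ?_
    refine le_trans (Polynomial.natDegree_X_pow_le _) ?_
    omega
  have hroot : ∀ a ∈ (Finset.range p).filter (fun a : ℕ => (p : ℤ) ∣ Fder d k (a : ℤ)),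
      (a : ZMod p) ∈ g.roots.toFinset := by
    intro a ha
    rw [Finset.mem_filter] at ha
    rw [Multiset.mem_toFinset, Polynomial.mem_roots hgne]
    show g.eval (a : ZMod p) = 0
    have heval : g.eval ((a : ℕ) : ZMod p) = ((Fder d k (a : ℤ) : ℤ) : ZMod p) := by
      rw [hg, Polynomial.eval_finset_sum]
      simp only [Polynomial.eval_mul, Polynomial.eval_C, Polynomial.eval_pow, Polynomial.eval_X]
      rw [Fder]
      push_cast
      ring
    rw [heval, ZMod.intCast_zmod_eq_zero_iff_dvd]
    exact ha.2
  calc ((Finset.range p).filter (fun a : ℕ => (p : ℤ) ∣ Fder d k (a : ℤ))).card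
      ≤ g.roots.toFinset.card := by
        refine Finset.card_le_card_of_injOn (fun a => (a : ZMod p)) hroot ?_
        intro a ha b hb hab
        rw [Finset.coe_filter, Set.mem_setOf_eq, Finset.mem_range] at ha hb
        have := congrArg ZMod.val hab
        rwa [ZMod.val_natCast_of_lt ha.1, ZMod.val_natCast_of_lt hb.1] at this
    _ ≤ Multiset.card g.roots := g.roots.toFinset_card_le
    _ ≤ g.natDegree := Polynomial.card_roots' g
    _ ≤ d - 1 := hdeg

private lemma sum_range_sq {p : ℕ} (hp : 0 < p) (f : ℕ → ℂ) :
    ∑ n ∈ Finset.range (p ^ 2), f n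
      = ∑ a ∈ Finset.range p, ∑ b ∈ Finset.range p, f (a + p * b) := by
  rw [← Finset.sum_product']
  refine Finset.sum_nbij' (fun n => (n % p, n / p)) (fun x => x.1 + p * x.2) ?_ ?_ ?_ ?_ ?_
  · intro n hn
    simp only [Finset.mem_range, pow_two] at hn
    simp only [Finset.mem_product, Finset.mem_range]
    exact ⟨Nat.mod_lt _ hp, Nat.div_lt_iff_lt_mul hp |>.mpr (by nlinarith)⟩
  · intro x hx
    simp only [Finset.mem_product, Finset.mem_range] at hx
    simp only [Finset.mem_range, pow_two]
    nlinarith [hx.1, hx.2]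
  · intro n _
    simp [Nat.mod_add_div]
  · intro x hx
    simp only [Finset.mem_product, Finset.mem_range] at hx
    simp [Nat.add_mul_div_left _ _ hp, Nat.div_eq_of_lt hx.1, Nat.mod_eq_of_lt hx.1]
  · intro n _
    simp [Nat.mod_add_div]

private lemma geom_aux {p : ℕ} (hp : 0 < p) (c : ℤ) :
    ∑ b ∈ Finset.range p, Complex.exp (2 * Real.pi * Complex.I * c * b / p)
      = if (p : ℤ) ∣ c then (p : ℂ) else 0 := by
  have hp0 : (p : ℂ) ≠ 0 := Nat.cast_ne_zero.mpr hp.ne'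
  have hterm : ∀ b : ℕ, Complex.exp (2 * Real.pi * Complex.I * c * b / p)
      = (Complex.exp (2 * Real.pi * Complex.I * c / p)) ^ b := by
    intro b
    rw [← Complex.exp_nat_mul]
    ring_nf
  simp only [hterm]
  by_cases h : (p : ℤ) ∣ c
  · obtain ⟨m, hm⟩ := h
    have : Complex.exp (2 * Real.pi * Complex.I * c / p) = 1 := by
      have : (2 * Real.pi * Complex.I * c / p : ℂ) = (m : ℤ) * (2 * Real.pi * Complex.I) := by
        field_simp
        push_cast [hm]
        ring
      rw [this, Complex.exp_int_mul_two_pi_mul_I]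
    simp only [this, one_pow, Finset.sum_const, Finset.card_range, nsmul_eq_mul, mul_one]
    rw [if_pos ⟨m, hm⟩]
  · have hne : Complex.exp (2 * Real.pi * Complex.I * c / p) ≠ 1 := by
      intro hcon
      obtain ⟨n, hn⟩ := Complex.exp_eq_one_iff.mp hcon
      apply h
      refine ⟨n, ?_⟩

      have h2 : (2 * Real.pi * Complex.I : ℂ) ≠ 0 := by
        simp [Real.pi_ne_zero, Complex.I_ne_zero]
      have hcp : (c : ℂ) = p * n := by
        field_simp at hn
        apply mul_left_cancel₀ h2
        linear_combination (2 * Real.pi * Complex.I) * hn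
      exact_mod_cast hcp
    rw [geom_sum_eq hne]
    have : Complex.exp (2 * Real.pi * Complex.I * c / p) ^ p = 1 := by
      rw [← Complex.exp_nat_mul]
      have : (p : ℂ) * (2 * Real.pi * Complex.I * c / p) = (c : ℤ) * (2 * Real.pi * Complex.I) := by
        field_simp
      rw [this, Complex.exp_int_mul_two_pi_mul_I]
    simp [this, h]

private lemma key_bound (d : ℕ) (k : Fin d → ℤ) (p : ℕ) (hp : p.Prime)
    (hgood : ∃ j : Fin d, ¬ ((p : ℤ) ∣ ((j : ℕ) + 1) * k j)) :
    ‖∑ n ∈ Finset.range (p ^ 2),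
        Complex.exp (2 * Real.pi * Complex.I * ((Fpoly d k (n : ℤ) : ℤ) : ℂ) / (p : ℂ) ^ 2)‖
      ≤ ((d : ℝ) - 1) * p := by
  have hd : 1 ≤ d := hgood.choose.pos
  have hppos : 0 < p := hp.pos
  have hp0 : (p : ℂ) ≠ 0 := Nat.cast_ne_zero.mpr hppos.ne'
  rw [sum_range_sq hppos]
  have hsplit : ∀ a ∈ Finset.range p, ∀ b ∈ Finset.range p,
      Complex.exp (2 * Real.pi * Complex.I * ((Fpoly d k ((a + p * b : ℕ) : ℤ) : ℤ) : ℂ) / (p : ℂ) ^ 2)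
        = Complex.exp (2 * Real.pi * Complex.I * ((Fpoly d k (a : ℤ) : ℤ) : ℂ) / (p : ℂ) ^ 2)
          * Complex.exp (2 * Real.pi * Complex.I * ((Fder d k (a : ℤ) : ℤ) : ℂ) * (b : ℂ) / (p : ℂ)) := by
    intro a _ b _
    obtain ⟨t, ht⟩ := Fshift d k (p : ℤ) (b : ℤ) (a : ℤ)
    have hcast : ((a + p * b : ℕ) : ℤ) = (a : ℤ) + (p : ℤ) * b := by push_cast; ring
    rw [hcast]
    have hteq : (Fpoly d k ((a : ℤ) + (p : ℤ) * b) : ℂ)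
        = (Fpoly d k (a : ℤ) : ℂ) + (Fder d k (a : ℤ) : ℂ) * ((p : ℂ) * b) + (p : ℂ) ^ 2 * (t : ℂ) := by
      have : Fpoly d k ((a : ℤ) + (p : ℤ) * b)
          = Fpoly d k (a : ℤ) + Fder d k (a : ℤ) * ((p : ℤ) * b) + (p : ℤ) ^ 2 * t := by linarith [ht]
      exact_mod_cast congrArg (Int.cast : ℤ → ℂ) this
    have harg : 2 * Real.pi * Complex.I * ((Fpoly d k ((a : ℤ) + (p : ℤ) * b) : ℤ) : ℂ) / (p : ℂ) ^ 2
        = 2 * Real.pi * Complex.I * ((Fpoly d k (a : ℤ) : ℤ) : ℂ) / (p : ℂ) ^ 2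
          + 2 * Real.pi * Complex.I * ((Fder d k (a : ℤ) : ℤ) : ℂ) * (b : ℂ) / (p : ℂ)
          + (t : ℂ) * (2 * Real.pi * Complex.I) := by
      rw [hteq]
      field_simp
    rw [harg, Complex.exp_add, Complex.exp_add, Complex.exp_int_mul_two_pi_mul_I, mul_one]
  rw [Finset.sum_congr rfl fun a ha => Finset.sum_congr rfl fun b hb => hsplit a ha b hb]
  have hinner : ∀ a : ℕ,
      ∑ b ∈ Finset.range p,
          Complex.exp (2 * Real.pi * Complex.I * ((Fpoly d k (a : ℤ) : ℤ) : ℂ) / (p : ℂ) ^ 2)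
            * Complex.exp (2 * Real.pi * Complex.I * ((Fder d k (a : ℤ) : ℤ) : ℂ) * (b : ℂ) / (p : ℂ))
        = Complex.exp (2 * Real.pi * Complex.I * ((Fpoly d k (a : ℤ) : ℤ) : ℂ) / (p : ℂ) ^ 2)
            * (if (p : ℤ) ∣ Fder d k (a : ℤ) then (p : ℂ) else 0) := by
    intro a
    rw [← Finset.mul_sum, geom_aux hppos (Fder d k (a : ℤ))]
  rw [Finset.sum_congr rfl fun a _ => hinner a]
  simp only [mul_ite, mul_zero]
  rw [← Finset.sum_filter]
  refine le_trans (norm_sum_le _ _) ?_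
  have hterm : ∀ a ∈ (Finset.range p).filter (fun a : ℕ => (p : ℤ) ∣ Fder d k (a : ℤ)),
      ‖Complex.exp (2 * Real.pi * Complex.I * ((Fpoly d k (a : ℤ) : ℤ) : ℂ) / (p : ℂ) ^ 2)
        * (p : ℂ)‖ = (p : ℝ) := by
    intro a _
    rw [norm_mul]
    have h1 : ‖Complex.exp
        (2 * Real.pi * Complex.I * ((Fpoly d k (a : ℤ) : ℤ) : ℂ) / (p : ℂ) ^ 2)‖ = 1 := by
      have harg : 2 * Real.pi * Complex.I * ((Fpoly d k (a : ℤ) : ℤ) : ℂ) / (p : ℂ) ^ 2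
          = ((2 * Real.pi * (Fpoly d k (a : ℤ) : ℝ) / (p : ℝ) ^ 2 : ℝ) : ℂ) * Complex.I := by
        push_cast
        ring
      rw [harg, Complex.norm_exp_ofReal_mul_I]
    rw [h1, one_mul, Complex.norm_natCast]
  rw [Finset.sum_congr rfl hterm, Finset.sum_const, nsmul_eq_mul]
  have hcardle := rootcount d k p hp hgood
  have hcast : ((((Finset.range p).filter (fun a : ℕ => (p : ℤ) ∣ Fder d k (a : ℤ))).card : ℝ))
      ≤ (d : ℝ) - 1 := by
    calc ((((Finset.range p).filter (fun a : ℕ => (p : ℤ) ∣ Fder d k (a : ℤ))).card : ℝ))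
        ≤ ((d - 1 : ℕ) : ℝ) := by exact_mod_cast hcardle
      _ = (d : ℝ) - 1 := by rw [Nat.cast_sub hd]; norm_num
  exact mul_le_mul_of_nonneg_right hcast (Nat.cast_nonneg p)


set_option maxHeartbeats 1000000 in
/-- Let `M ≥ 2`, let `c > 0` with `|𝑃_M| ≥ c·M/log M`, let `d ≥ 1` and
`k ∈ ℤᵈ \ {0}`. Writing `N_T = ∑_{p∈𝑃_M} p²`, the composite exponential sum over the
composite Korobov point set `T_{M,d}^comp` satisfies
`|(1/N_T) ∑_{p∈𝑃_M} ∑_{n=0}^{p²-1} exp(2πi(k₁n + ⋯ + k_d nᵈ)/p²)|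
  ≤ 4(d-1)/M + 4 log|k|_∞ /(c·M)`. -/
theorem composite_korobov_T_exp_sum_bound (M : ℕ) (hM : 2 ≤ M) (c : ℝ) (hc : 0 < c)
    (hcard : c * M / Real.log M ≤ ((primesInDyadic M).card : ℝ))
    (d : ℕ) (hd : 1 ≤ d) (k : Fin d → ℤ) (hk : k ≠ 0) :
    ‖(1 / ((∑ p ∈ primesInDyadic M, p ^ 2 : ℕ) : ℂ)) *
        ∑ p ∈ primesInDyadic M, ∑ n ∈ Finset.range (p ^ 2),
          Complex.exp (2 * Real.pi * Complex.I *
            (∑ j : Fin d, (k j : ℂ) * (n : ℂ) ^ ((j : ℕ) + 1)) / (p : ℂ) ^ 2)‖ ≤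
      4 * ((d : ℝ) - 1) / M +
        4 * Real.log ((Finset.univ.sup fun j : Fin d => (k j).natAbs : ℕ) : ℝ) / (c * M) := by
  classical
  set P := primesInDyadic M with hPdef
  have hPfacts : ∀ p ∈ P, p.Prime ∧ (M + 1) / 2 < p ∧ p ≤ M := by
    intro p hp
    rw [hPdef, primesInDyadic, Finset.mem_filter, Finset.mem_range] at hp
    exact ⟨hp.2.1, hp.2.2, by omega⟩
  have hM2p : ∀ p ∈ P, M < 2 * p := by
    intro p hp
    have := (hPfacts p hp).2.1
    omega
  have hMR : (1:ℝ) < M := by exact_mod_cast hM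
  have hMpos : (0:ℝ) < M := by linarith
  have hlogM : 0 < Real.log M := Real.log_pos hMR
  have hcardpos : 0 < P.card := by
    have h1 : (0:ℝ) < c * M / Real.log M := by positivity
    have h2 : (0:ℝ) < (P.card : ℝ) := lt_of_lt_of_le h1 hcard
    exact_mod_cast h2
  have hPne : P.Nonempty := Finset.card_pos.mp hcardpos
  set N : ℕ := ∑ p ∈ P, p ^ 2 with hNdef
  have hNpos : 0 < N := Finset.sum_pos (fun p hp => pow_pos (hPfacts p hp).1.pos 2) hPne
  have hNR : (0:ℝ) < N := by exact_mod_cast hNpos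
  set K : ℕ := Finset.univ.sup fun j : Fin d => (k j).natAbs with hKdef
  obtain ⟨j0, hj0⟩ : ∃ j, k j ≠ 0 := Function.ne_iff.mp hk
  have hK1 : 1 ≤ K := by
    refine le_trans ?_ (Finset.le_sup (Finset.mem_univ j0))
    omega
  have hlogK : 0 ≤ Real.log K := Real.log_nonneg (by exact_mod_cast hK1)
  -- rewrite the summand in terms of Fpoly
  have hrw : ∀ p : ℕ, ∀ n ∈ Finset.range (p ^ 2),
      Complex.exp (2 * Real.pi * Complex.I *
          (∑ j : Fin d, (k j : ℂ) * (n : ℂ) ^ ((j : ℕ) + 1)) / (p : ℂ) ^ 2)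
        = Complex.exp (2 * Real.pi * Complex.I * ((Fpoly d k (n : ℤ) : ℤ) : ℂ) / (p : ℂ) ^ 2) := by
    intro p n _
    have hX : (∑ j : Fin d, (k j : ℂ) * (n : ℂ) ^ ((j : ℕ) + 1)) = ((Fpoly d k (n : ℤ) : ℤ) : ℂ) := by
      rw [Fpoly]
      push_cast
      ring
    rw [hX]
  rw [Finset.sum_congr rfl fun p _ => Finset.sum_congr rfl (hrw p)]
  set Sp : ℕ → ℂ := fun p => ∑ n ∈ Finset.range (p ^ 2),
      Complex.exp (2 * Real.pi * Complex.I * ((Fpoly d k (n : ℤ) : ℤ) : ℂ) / (p : ℂ) ^ 2) with hSp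
  -- trivial bound
  have htriv : ∀ p : ℕ, ‖Sp p‖ ≤ (p : ℝ) ^ 2 := by
    intro p
    refine le_trans (norm_sum_le _ _) ?_
    have h1 : ∀ n ∈ Finset.range (p ^ 2),
        ‖Complex.exp (2 * Real.pi * Complex.I * ((Fpoly d k (n : ℤ) : ℤ) : ℂ) / (p : ℂ) ^ 2)‖
          = 1 := by
      intro n _
      have harg : 2 * Real.pi * Complex.I * ((Fpoly d k (n : ℤ) : ℤ) : ℂ) / (p : ℂ) ^ 2
          = ((2 * Real.pi * (Fpoly d k (n : ℤ) : ℝ) / (p : ℝ) ^ 2 : ℝ) : ℂ) * Complex.I := by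
        push_cast
        ring
      rw [harg, Complex.norm_exp_ofReal_mul_I]
    rw [Finset.sum_congr rfl h1, Finset.sum_const, Finset.card_range, nsmul_eq_mul, mul_one]
    push_cast
    exact le_rfl

  have hNcast : (N : ℝ) = ∑ p ∈ P, (p : ℝ) ^ 2 := by
    rw [hNdef]
    push_cast
    ring
  have habs : ‖1 / (N : ℂ)‖ = 1 / (N : ℝ) := by
    rw [norm_div, norm_one, Complex.norm_natCast]
  rw [norm_mul, habs, one_div, inv_mul_eq_div, div_le_iff₀ hNR]
  have hsum : ‖∑ p ∈ P, Sp p‖ ≤ ∑ p ∈ P, ‖Sp p‖ :=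
    norm_sum_le _ _
  have hrhs2 : 0 ≤ 4 * Real.log K / (c * M) := by positivity
  by_cases hMd : M ≤ 4 * (d - 1)
  · -- trivial case
    have h1 : ∑ p ∈ P, ‖Sp p‖ ≤ (N : ℝ) := by
      rw [hNcast]
      exact Finset.sum_le_sum fun p _ => htriv p
    have h2 : (1 : ℝ) ≤ 4 * ((d : ℝ) - 1) / M := by
      rw [le_div_iff₀ hMpos]
      have h3 : (M : ℝ) ≤ ((4 * (d - 1) : ℕ) : ℝ) := by exact_mod_cast hMd
      have h4 : ((4 * (d - 1) : ℕ) : ℝ) = 4 * ((d : ℝ) - 1) := by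
        push_cast [Nat.cast_sub hd]
        ring
      linarith
    calc ‖∑ p ∈ P, Sp p‖ ≤ (N : ℝ) := hsum.trans h1
      _ = 1 * N := (one_mul _).symm
      _ ≤ (4 * ((d : ℝ) - 1) / M + 4 * Real.log K / (c * M)) * N := by
          refine mul_le_mul_of_nonneg_right ?_ hNR.le
          linarith
  · push_neg at hMd
    have hdp : ∀ p ∈ P, d < p := by
      intro p hp
      have h1 := (hPfacts p hp).1.two_le
      have h2 := hM2p p hp
      omega
    have hd1R : (0:ℝ) ≤ (d : ℝ) - 1 := by
      have : (1:ℝ) ≤ (d:ℝ) := by exact_mod_cast hd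
      linarith
    set B := P.filter (fun p : ℕ => ∀ j : Fin d, (p : ℤ) ∣ ((j : ℕ) + 1) * k j) with hBdef
    have hBsub : B ⊆ P := Finset.filter_subset _ _
    have hgoodbound : ∀ p ∈ P \ B, ‖Sp p‖ ≤ ((d : ℝ) - 1) * p := by
      intro p hp
      rw [Finset.mem_sdiff] at hp
      have hnot : ¬ (∀ j : Fin d, (p : ℤ) ∣ ((j : ℕ) + 1) * k j) := fun hall =>
        hp.2 (Finset.mem_filter.mpr ⟨hp.1, hall⟩)
      push_neg at hnot
      exact key_bound d k p (hPfacts p hp.1).1 hnot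
    have hbadk : ∀ p ∈ B, (p : ℤ) ∣ k j0 := by
      intro p hpB
      rw [hBdef, Finset.mem_filter] at hpB
      have hpP := hpB.1
      have hdvd := hpB.2 j0
      have hpprime : Prime (p : ℤ) := Int.prime_iff_natAbs_prime.mpr (by simpa using (hPfacts p hpP).1)
      rcases hpprime.dvd_mul.mp hdvd with h | h
      · exfalso
        have hle : (p : ℤ) ≤ (j0 : ℕ) + 1 := Int.le_of_dvd (by positivity) h
        have hle2 : p ≤ (j0 : ℕ) + 1 := by exact_mod_cast hle
        have hj0d : (j0 : ℕ) < d := j0.isLt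
        have := hdp p hpP
        omega
      · exact h
    have hlogsum : ∑ p ∈ B, Real.log p ≤ Real.log K := by
      have hprodvd : (∏ p ∈ B, p) ∣ (k j0).natAbs := by
        refine Finset.prod_primes_dvd _ (fun p hp => ?_) (fun p hp => ?_)
        · exact (hPfacts p (hBsub hp)).1.prime
        · have h2 : ((p : ℤ)).natAbs ∣ (k j0).natAbs := Int.natAbs_dvd_natAbs.mpr (hbadk p hp)
          simpa using h2
      have hprodpos : 0 < ∏ p ∈ B, p := Finset.prod_pos fun p hp => (hPfacts p (hBsub hp)).1.pos
      have hK2 : (k j0).natAbs ≤ K :=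
        Finset.le_sup (f := fun j : Fin d => (k j).natAbs) (Finset.mem_univ j0)
      have hleK : (∏ p ∈ B, p) ≤ K :=
        le_trans (Nat.le_of_dvd (Int.natAbs_pos.mpr hj0) hprodvd) hK2
      calc ∑ p ∈ B, Real.log p = Real.log (∏ p ∈ B, (p : ℝ)) :=
            (Real.log_prod fun p hp => by
              exact_mod_cast (hPfacts p (hBsub hp)).1.pos.ne').symm
        _ = Real.log ((∏ p ∈ B, p : ℕ) : ℝ) := by rw [Nat.cast_prod]
        _ ≤ Real.log K := by
            apply Real.log_le_log (by exact_mod_cast hprodpos)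
            exact_mod_cast hleK
    have hplogs : ∀ p ∈ P, (p : ℝ) ^ 2 * Real.log M ≤ (M : ℝ) ^ 2 * Real.log p := by
      intro p hp
      obtain ⟨hpr, hhalf, hpM⟩ := hPfacts p hp
      rcases eq_or_lt_of_le hpM with heq | hlt
      · subst heq
        exact le_rfl
      · have hp3 : 3 ≤ p := by
          have h2 := hpr.two_le
          omega
        have hpR : (3 : ℝ) ≤ p := by exact_mod_cast hp3
        have hpMR : (p : ℝ) ≤ M := by exact_mod_cast hpM
        have hppos : (0:ℝ) < p := by linarith
        have he1 : Real.exp 1 ≤ (p : ℝ) :=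
          le_trans (le_trans Real.exp_one_lt_d9.le (by norm_num)) hpR
        have hmono := Real.log_div_self_antitoneOn (Set.mem_setOf.mpr he1)
          (Set.mem_setOf.mpr (he1.trans hpMR)) hpMR
        simp only at hmono
        rw [div_le_div_iff₀ hMpos hppos] at hmono
        have hlogp : 0 ≤ Real.log p := Real.log_nonneg (by linarith)
        have h1 : (p:ℝ) * (Real.log M * p) ≤ p * (Real.log p * M) :=
          mul_le_mul_of_nonneg_left hmono hppos.le
        have h2 : (p:ℝ) * (Real.log p * M) ≤ M * (Real.log p * M) :=
          mul_le_mul_of_nonneg_right hpMR (by positivity)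
        nlinarith [h1, h2]
    have hbadsum : ∑ p ∈ B, (p : ℝ) ^ 2 ≤ (M : ℝ) ^ 2 * Real.log K / Real.log M := by
      rw [le_div_iff₀ hlogM]
      calc (∑ p ∈ B, (p : ℝ) ^ 2) * Real.log M = ∑ p ∈ B, (p : ℝ) ^ 2 * Real.log M :=
            Finset.sum_mul _ _ _
        _ ≤ ∑ p ∈ B, (M : ℝ) ^ 2 * Real.log p :=
            Finset.sum_le_sum fun p hp => hplogs p (hBsub hp)
        _ = (M : ℝ) ^ 2 * ∑ p ∈ B, Real.log p := (Finset.mul_sum _ _ _).symm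
        _ ≤ (M : ℝ) ^ 2 * Real.log K :=
            mul_le_mul_of_nonneg_left hlogsum (by positivity)
    have hNlower : (c * M / Real.log M) * ((M : ℝ) ^ 2 / 4) ≤ (N : ℝ) := by
      have h1 : ∀ p ∈ P, (M : ℝ) ^ 2 / 4 ≤ (p : ℝ) ^ 2 := by
        intro p hp
        have h2 := hM2p p hp
        have h3 : (M : ℝ) ≤ 2 * p := by exact_mod_cast h2.le
        nlinarith [hMpos]
      calc (c * M / Real.log M) * ((M : ℝ) ^ 2 / 4)
          ≤ (P.card : ℝ) * ((M : ℝ) ^ 2 / 4) :=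
            mul_le_mul_of_nonneg_right hcard (by positivity)
        _ = ∑ _p ∈ P, ((M : ℝ) ^ 2 / 4) := by rw [Finset.sum_const, nsmul_eq_mul]
        _ ≤ ∑ p ∈ P, (p : ℝ) ^ 2 := Finset.sum_le_sum h1
        _ = (N : ℝ) := hNcast.symm
    have hsump : ∑ p ∈ P, (p : ℝ) ≤ 2 / (M : ℝ) * N := by
      rw [hNcast, Finset.mul_sum]
      refine Finset.sum_le_sum fun p hp => ?_
      have h2 := hM2p p hp
      have h3 : (M : ℝ) ≤ 2 * p := by exact_mod_cast h2.le
      have hppos : (0:ℝ) < p := by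
        have := (hPfacts p hp).1.pos
        exact_mod_cast this
      rw [div_mul_eq_mul_div, le_div_iff₀ hMpos]
      nlinarith
    have hbadterm : (M : ℝ) ^ 2 * Real.log K / Real.log M ≤ (4 * Real.log K / (c * M)) * N := by
      calc (M : ℝ) ^ 2 * Real.log K / Real.log M
          = (4 * Real.log K / (c * M)) * ((c * M / Real.log M) * ((M : ℝ) ^ 2 / 4)) := by
            field_simp
        _ ≤ (4 * Real.log K / (c * M)) * N :=
            mul_le_mul_of_nonneg_left hNlower (by positivity)
    calc ‖∑ p ∈ P, Sp p‖ ≤ ∑ p ∈ P, ‖Sp p‖ := hsum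
      _ = (∑ p ∈ P \ B, ‖Sp p‖) + ∑ p ∈ B, ‖Sp p‖ :=
          (Finset.sum_sdiff hBsub).symm
      _ ≤ (∑ p ∈ P \ B, ((d : ℝ) - 1) * p) + ∑ p ∈ B, (p : ℝ) ^ 2 :=
          add_le_add (Finset.sum_le_sum hgoodbound) (Finset.sum_le_sum fun p _ => htriv p)
      _ ≤ (∑ p ∈ P, ((d : ℝ) - 1) * p) + (M : ℝ) ^ 2 * Real.log K / Real.log M := by
          refine add_le_add ?_ hbadsum
          refine Finset.sum_le_sum_of_subset_of_nonneg Finset.sdiff_subset fun p _ _ => ?_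
          exact mul_nonneg hd1R (Nat.cast_nonneg p)
      _ = ((d : ℝ) - 1) * (∑ p ∈ P, (p : ℝ)) + (M : ℝ) ^ 2 * Real.log K / Real.log M := by
          rw [Finset.mul_sum]
      _ ≤ ((d : ℝ) - 1) * (2 / (M : ℝ) * N) + (4 * Real.log K / (c * M)) * N :=
          add_le_add (mul_le_mul_of_nonneg_left hsump hd1R) hbadterm
      _ ≤ (4 * ((d : ℝ) - 1) / M + 4 * Real.log K / (c * M)) * N := by
          rw [add_mul]
          refine add_le_add ?_ le_rfl
          have he1 : ((d:ℝ) - 1) * (2 / M * N) = (2 * ((d:ℝ) - 1) * N) / M := by ring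
          have he2 : (4 * ((d:ℝ) - 1) / M) * N = (4 * ((d:ℝ) - 1) * N) / M := by ring
          rw [he1, he2]
          gcongr
          nlinarith [mul_nonneg hd1R hNR.le]
end

section
/- Let M ≥ 2 be an integer and let c ∈ (0,1) be a constant such that |𝑃_M| ≥ c·M/log M, where 𝑃_M is the set of primes p with ⌈M/2⌉ < p ≤ M. Let d ≥ 1 and let f : ℝ^d → ℂ be given by an absolutely convergent Fourier series f(x) = Σ_{k∈ℤ^d} ĉ(k)·exp(2πi k·x) whose coefficients satisfy ‖f‖ := Σ_{k∈ℤ^d} |ĉ(k)|·max(1, log|k|_∞) < ∞. Then the QMC rule based on the composite Korobov point set T_{M,d}^comp satisfies |ĉ(0) − (1/N_T) Σ_{p∈𝑃_M} Σ_{n=0}^{p^2−1} f(x̃_n^{(p)})| ≤ (8d/(c·M))·‖f‖, where N_T = Σ_{p∈𝑃_M} p^2 and x̃_n^{(p)} = ({n/p^2}, {n^2/p^2}, …, {n^d/p^2}). Consequently, since N_T ≤ M^3, the error is at most (8d/(c·N_T^{1/3}))·‖f‖. -/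
open Complex Finset Polynomial

noncomputable def ee (x : ℝ) : ℂ := Complex.exp (2 * Real.pi * Complex.I * x)

lemma ee_add (x y : ℝ) : ee (x + y) = ee x * ee y := by
  simp [ee, ← Complex.exp_add]; ring_nf

lemma ee_int (n : ℤ) : ee n = 1 := by
  simpa [ee, mul_comm] using Complex.exp_int_mul_two_pi_mul_I n

lemma ee_int_add (n : ℤ) (x : ℝ) : ee (n + x) = ee x := by
  rw [ee_add, ee_int, one_mul]

lemma abs_ee (x : ℝ) : ‖ee x‖ = 1 := by
  rw [ee, show (2 : ℂ) * Real.pi * Complex.I * x = (((2 * Real.pi * x : ℝ)) : ℂ) * Complex.I by push_cast; ring]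
  exact Complex.norm_exp_ofReal_mul_I _

lemma ee_eq_one_iff (x : ℝ) : ee x = 1 ↔ ∃ n : ℤ, x = n := by
  rw [ee, Complex.exp_eq_one_iff]
  constructor
  · rintro ⟨n, hn⟩
    refine ⟨n, ?_⟩
    have hI : (2 : ℂ) * Real.pi * Complex.I ≠ 0 := by
      exact mul_ne_zero (mul_ne_zero two_ne_zero
        (Complex.ofReal_ne_zero.2 Real.pi_ne_zero)) Complex.I_ne_zero
    have : (x : ℂ) = n := mul_left_cancel₀ hI (hn.trans (by ring))
    exact_mod_cast this
  · rintro ⟨n, hn⟩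
    exact ⟨n, by rw [hn]; push_cast; ring⟩

lemma ee_mul_nat (m : ℕ) (x : ℝ) : ee (m * x) = ee x ^ m := by
  induction m with
  | zero => simp [ee]
  | succ n ih => push_cast; rw [add_mul, one_mul, ee_add, ih, pow_succ]

lemma sum_ee_geom (N : ℕ) (hN : 0 < N) (k : ℤ) :
    ∑ n ∈ Finset.range N, ee (k * n / N) = if (N : ℤ) ∣ k then (N : ℂ) else 0 := by
  have hterm : ∀ n : ℕ, ee (k * n / N) = ee (k / N) ^ n := by
    intro n
    rw [← ee_mul_nat]
    congr 1; ring
  by_cases hdvd : (N : ℤ) ∣ k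
  · rw [if_pos hdvd]
    obtain ⟨m, rfl⟩ := hdvd
    have h1 : ee ((N * m : ℤ) / N : ℝ) = 1 := by
      have : ((N * m : ℤ) / N : ℝ) = (m : ℤ) := by
        push_cast; field_simp
      rw [this, ee_int]
    calc ∑ n ∈ Finset.range N, ee ((N*m : ℤ) * n / N)
        = ∑ n ∈ Finset.range N, ee (((N*m:ℤ):ℝ) / N) ^ n := by
          exact Finset.sum_congr rfl fun n _ => hterm n
      _ = ∑ n ∈ Finset.range N, 1 := by rw [h1]; simp
      _ = N := by simp
  · rw [if_neg hdvd]
    have hz : ee ((k : ℝ) / N) ≠ 1 := by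
      intro h
      rw [ee_eq_one_iff] at h
      obtain ⟨n, hn⟩ := h
      apply hdvd
      have : (k : ℝ) = n * N := by
        field_simp at hn
        linarith [hn]
      refine ⟨n, ?_⟩
      have : (k : ℝ) = ((N * n : ℤ) : ℝ) := by push_cast; linarith [this]
      exact_mod_cast this
    have := geom_sum_eq hz N
    rw [show ∑ n ∈ Finset.range N, ee (k * n / N) = ∑ n ∈ Finset.range N, ee ((k:ℝ)/N) ^ n from
      Finset.sum_congr rfl fun n _ => hterm n, this]
    have hpow : ee ((k:ℝ)/N) ^ N = 1 := by
      rw [← ee_mul_nat]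
      have : (N : ℝ) * ((k:ℝ)/N) = (k : ℤ) := by field_simp
      rw [this, ee_int]
    rw [hpow]; simp

def gg (d : ℕ) (k : Fin d → ℤ) (n : ℤ) : ℤ := ∑ j : Fin d, k j * n ^ ((j : ℕ) + 1)
def gg' (d : ℕ) (k : Fin d → ℤ) (n : ℤ) : ℤ := ∑ j : Fin d, ((j : ℕ) + 1) * k j * n ^ (j : ℕ)

noncomputable def SS (d : ℕ) (k : Fin d → ℤ) (p : ℕ) : ℂ :=
  ∑ n ∈ Finset.range (p ^ 2), ee ((gg d k n : ℝ) / (p ^ 2 : ℕ))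

lemma key_pow (p a b : ℤ) : ∀ m : ℕ,
    (p ^ 2 : ℤ) ∣ ((a + p * b) ^ (m + 1) - (a ^ (m + 1) + (m + 1) * a ^ m * (p * b)))
  | 0 => by ring_nf; simp
  | (m + 1) => by
    obtain ⟨t, ht⟩ := key_pow p a b m
    refine ⟨t * (a + p * b) + (m + 1) * a ^ m * b ^ 2, ?_⟩
    have : (a + p * b) ^ (m + 1 + 1) = ((a + p * b) ^ (m + 1)) * (a + p * b) := by ring
    rw [this, show (a + p*b)^(m+1) = (a ^ (m + 1) + (↑m + 1) * a ^ m * (p * b)) + p^2 * t by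
      linarith [ht]]
    push_cast
    ring

lemma g_congr (d : ℕ) (k : Fin d → ℤ) (p a b : ℤ) :
    (p ^ 2 : ℤ) ∣ (gg d k (a + p * b) - (gg d k a + p * b * gg' d k a)) := by
  have : gg d k (a + p * b) - (gg d k a + p * b * gg' d k a)
      = ∑ j : Fin d, k j * ((a + p * b) ^ ((j:ℕ) + 1)
          - (a ^ ((j:ℕ) + 1) + ((j:ℕ) + 1) * a ^ (j:ℕ) * (p * b))) := by
    simp only [gg, gg', Finset.mul_sum, ← Finset.sum_sub_distrib, ← Finset.sum_add_distrib]
    congr 1; funext j; push_cast; ring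
  rw [this]
  exact Finset.dvd_sum fun j _ => Dvd.dvd.mul_left (key_pow p a b (j : ℕ)) _

lemma SS_eq (d : ℕ) (k : Fin d → ℤ) (p : ℕ) (hp : 0 < p) :
    SS d k p = ∑ a ∈ Finset.range p,
      ee ((gg d k a : ℝ) / (p ^ 2 : ℕ)) * (if (p : ℤ) ∣ gg' d k a then (p : ℂ) else 0) := by
  have hreindex : SS d k p
      = ∑ a ∈ Finset.range p, ∑ b ∈ Finset.range p, ee ((gg d k (a + p * b) : ℝ) / (p ^ 2 : ℕ)) := by
    rw [SS, ← Finset.sum_product']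
    rw [show p ^ 2 = p * p from sq p]
    apply Finset.sum_nbij' (fun n => ((n % p : ℕ), (n / p : ℕ)))
      (fun x => x.1 + p * x.2)
    · intro n hn
      simp only [Finset.mem_range] at hn ⊢
      exact Finset.mem_product.2 ⟨Finset.mem_range.2 (Nat.mod_lt _ hp),
        Finset.mem_range.2 (Nat.div_lt_of_lt_mul (by rw [mul_comm] at hn ⊢; exact hn))⟩
    · intro x hx
      simp only [Finset.mem_product, Finset.mem_range] at hx
      refine Finset.mem_range.2 ?_
      have h1 := hx.1; have h2 := hx.2
      nlinarith
    · intro n hn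
      dsimp only
      exact Nat.mod_add_div n p
    · intro x hx
      simp only [Finset.mem_product, Finset.mem_range] at hx
      have h1 : (x.1 + p * x.2) % p = x.1 := by
        rw [Nat.add_mul_mod_self_left, Nat.mod_eq_of_lt hx.1]
      have h2 : (x.1 + p * x.2) / p = x.2 := by
        rw [Nat.add_mul_div_left _ _ hp, Nat.div_eq_of_lt hx.1, zero_add]
      exact Prod.ext h1 h2
    · intro n hn
      dsimp only
      have h : ((n : ℤ)) = ((n % p : ℕ) : ℤ) + (p : ℤ) * ((n / p : ℕ) : ℤ) := by
        exact_mod_cast (Nat.mod_add_div n p).symm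
      rw [← h]
  rw [hreindex]
  apply Finset.sum_congr rfl
  intro a _
  have hinner : ∀ b ∈ Finset.range p, ee ((gg d k (a + p * b) : ℝ) / (p ^ 2 : ℕ))
      = ee ((gg d k a : ℝ) / (p ^ 2 : ℕ)) * ee ((gg' d k a : ℝ) * b / p) := by
    intro b _
    obtain ⟨t, ht⟩ := g_congr d k (p : ℤ) ((a : ℕ) : ℤ) ((b : ℕ) : ℤ)
    have hp' : (0 : ℝ) < (p : ℝ) := by exact_mod_cast hp
    have hcast : ((gg d k ((a : ℤ) + (p : ℤ) * (b : ℤ)) : ℤ) : ℝ)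
        = ((gg d k (a : ℤ) : ℤ) : ℝ) + (p : ℝ) * (b : ℝ) * ((gg' d k (a : ℤ) : ℤ) : ℝ)
          + (p : ℝ) ^ 2 * (t : ℝ) := by
      have h2 : gg d k ((a : ℤ) + (p : ℤ) * (b : ℤ))
          = gg d k (a : ℤ) + (p : ℤ) * (b : ℤ) * gg' d k (a : ℤ) + (p : ℤ) ^ 2 * t := by
        linarith
      have := congrArg (fun z : ℤ => (z : ℝ)) h2
      push_cast at this
      push_cast
      linarith [this]
    have harg : ((gg d k ((a : ℤ) + (p : ℤ) * (b : ℤ)) : ℤ) : ℝ) / ((p ^ 2 : ℕ) : ℝ)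
        = ((t : ℤ) : ℝ) + (((gg d k (a : ℤ) : ℤ) : ℝ) / ((p ^ 2 : ℕ) : ℝ)
            + ((gg' d k (a : ℤ) : ℤ) : ℝ) * (b : ℝ) / (p : ℝ)) := by
      push_cast
      push_cast at hcast
      field_simp
      linear_combination hcast
    rw [harg, ee_int_add, ee_add]
  rw [Finset.sum_congr rfl hinner, ← Finset.mul_sum]
  congr 1
  exact sum_ee_geom p hp (gg' d k a)

lemma card_roots_bound (d p : ℕ) (hp : p.Prime) (hdp : d < p) (k : Fin d → ℤ)
    (j0 : Fin d) (hj0 : ¬ (p : ℤ) ∣ k j0) :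
    ((Finset.range p).filter (fun a : ℕ => (p : ℤ) ∣ gg' d k (a : ℤ))).card ≤ d - 1 := by
  haveI : Fact p.Prime := ⟨hp⟩
  set Q : Polynomial (ZMod p) :=
    ∑ j : Fin d, Polynomial.C ((((j : ℕ) + 1 : ℕ) : ZMod p) * ((k j : ℤ) : ZMod p))
      * Polynomial.X ^ (j : ℕ) with hQ
  have hcoeff : ∀ m : ℕ, Q.coeff m
      = ∑ j : Fin d, if m = (j : ℕ) then (((j : ℕ) + 1 : ℕ) : ZMod p) * ((k j : ℤ) : ZMod p)
          else 0 := by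
    intro m
    rw [hQ, Polynomial.finset_sum_coeff]
    exact Finset.sum_congr rfl fun j _ => by
      rw [Polynomial.coeff_C_mul, Polynomial.coeff_X_pow, mul_ite, mul_one, mul_zero]
  have hcoeffj : ∀ j : Fin d, Q.coeff (j : ℕ)
      = (((j : ℕ) + 1 : ℕ) : ZMod p) * ((k j : ℤ) : ZMod p) := by
    intro j
    rw [hcoeff]
    rw [Finset.sum_eq_single j (fun b _ hb => if_neg (fun h => hb (Fin.ext h.symm)))
      (fun h => absurd (Finset.mem_univ j) h)]
    exact if_pos rfl
  have hQne : Q ≠ 0 := by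
    intro h
    have := hcoeffj j0
    rw [h, Polynomial.coeff_zero] at this
    have h1 : (((j0 : ℕ) + 1 : ℕ) : ZMod p) ≠ 0 := by
      rw [Ne, ZMod.natCast_eq_zero_iff]
      intro hdvd
      have := Nat.le_of_dvd (Nat.succ_pos _) hdvd
      omega
    have h2 : ((k j0 : ℤ) : ZMod p) ≠ 0 := by
      rw [Ne, ZMod.intCast_zmod_eq_zero_iff_dvd]
      exact_mod_cast hj0
    exact mul_ne_zero h1 h2 this.symm
  have hdeg : Q.natDegree ≤ d - 1 := by
    rw [Polynomial.natDegree_le_iff_coeff_eq_zero]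
    intro m hm
    rw [hcoeff]
    refine Finset.sum_eq_zero fun j _ => if_neg fun h => ?_
    have := j.isLt
    omega
  have hroot : ∀ a : ℕ, (p : ℤ) ∣ gg' d k (a : ℤ) ↔ Q.IsRoot ((a : ZMod p)) := by
    intro a
    rw [← ZMod.intCast_zmod_eq_zero_iff_dvd]
    have hev : Q.eval ((a : ZMod p)) = ((gg' d k (a : ℤ) : ℤ) : ZMod p) := by
      rw [hQ, Polynomial.eval_finset_sum, gg', Int.cast_sum]
      refine Finset.sum_congr rfl fun j _ => ?_
      rw [Polynomial.eval_mul, Polynomial.eval_C, Polynomial.eval_pow, Polynomial.eval_X]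
      push_cast
      ring
    rw [Polynomial.IsRoot, hev]
  calc ((Finset.range p).filter (fun a : ℕ => (p : ℤ) ∣ gg' d k (a : ℤ))).card
      ≤ Q.roots.toFinset.card := by
        refine Finset.card_le_card_of_injOn (fun a : ℕ => (a : ZMod p)) ?_ ?_
        · intro a ha
          simp only [Finset.coe_filter, Set.mem_setOf_eq, Finset.mem_coe, Finset.mem_filter, Finset.mem_range] at ha ⊢
          rw [Multiset.mem_toFinset, Polynomial.mem_roots hQne]
          exact (hroot a).1 ha.2
        · intro a ha b hb hab
          simp only [Finset.coe_filter, Set.mem_setOf_eq, Finset.mem_range] at ha hb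
          simp only at hab
          have : (a : ZMod p).val = (b : ZMod p).val := by rw [hab]
          rwa [ZMod.val_cast_of_lt ha.1, ZMod.val_cast_of_lt hb.1] at this
    _ ≤ Q.roots.card := Multiset.toFinset_card_le _
    _ ≤ Q.natDegree := Polynomial.card_roots' Q
    _ ≤ d - 1 := hdeg

lemma abs_SS_le_trivial (d : ℕ) (k : Fin d → ℤ) (p : ℕ) :
    ‖SS d k p‖ ≤ (p : ℝ) ^ 2 := by
  calc ‖SS d k p‖ ≤ ∑ n ∈ Finset.range (p ^ 2),
        ‖ee ((gg d k n : ℝ) / (p ^ 2 : ℕ))‖ := by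
        exact norm_sum_le _ _
    _ = (p : ℝ) ^ 2 := by
        simp [abs_ee]

lemma abs_SS_le_nonbad (d : ℕ) (hd : 1 ≤ d) (k : Fin d → ℤ) (p : ℕ) (hp : p.Prime)
    (hk : ∃ j, ¬ (p : ℤ) ∣ k j) :
    ‖SS d k p‖ ≤ 2 * ((d : ℝ) - 1) * p := by
  obtain ⟨j0, hj0⟩ := hk
  rcases le_or_gt p d with hpd | hdp
  · have h2 : 2 ≤ d := le_trans hp.two_le hpd
    calc ‖SS d k p‖ ≤ (p : ℝ) ^ 2 := abs_SS_le_trivial d k p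
      _ ≤ (d : ℝ) * p := by
          have : (p : ℝ) ≤ d := by exact_mod_cast hpd
          nlinarith [show (0:ℝ) ≤ (p:ℝ) from by positivity]
      _ ≤ 2 * ((d : ℝ) - 1) * p := by
          have : (2 : ℝ) ≤ d := by exact_mod_cast h2
          nlinarith [show (0:ℝ) ≤ (p:ℝ) from by positivity]
  · have hcard := card_roots_bound d p hp hdp k j0 hj0
    rw [SS_eq d k p hp.pos]
    calc ‖∑ a ∈ Finset.range p,
          ee ((gg d k a : ℝ) / (p ^ 2 : ℕ)) * (if (p : ℤ) ∣ gg' d k a then (p : ℂ) else 0)‖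
        ≤ ∑ a ∈ Finset.range p, ‖ee ((gg d k a : ℝ) / (p ^ 2 : ℕ)) * (if (p : ℤ) ∣ gg' d k a then (p : ℂ) else 0)‖ :=
          norm_sum_le _ _
      _ = ∑ a ∈ Finset.range p, (if (p : ℤ) ∣ gg' d k (a : ℤ) then (p : ℝ) else 0) := by
          refine Finset.sum_congr rfl fun a _ => ?_
          rw [norm_mul, abs_ee, one_mul]
          split_ifs <;> simp
      _ = ((Finset.range p).filter (fun a : ℕ => (p : ℤ) ∣ gg' d k (a : ℤ))).card * (p : ℝ) := by
          rw [Finset.sum_ite, Finset.sum_const, Finset.sum_const_zero, add_zero]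
          simp [mul_comm]
      _ ≤ ((d : ℝ) - 1) * p := by
          have h1 : (((Finset.range p).filter (fun a : ℕ => (p : ℤ) ∣ gg' d k (a : ℤ))).card : ℝ)
              ≤ (d : ℝ) - 1 := by
            have : ((d - 1 : ℕ) : ℝ) = (d : ℝ) - 1 := by
              have : 1 ≤ d := hd
              push_cast [Nat.cast_sub this]
              ring
            rw [← this]
            exact_mod_cast hcard
          have : (0:ℝ) ≤ (p : ℝ) := by positivity
          nlinarith
      _ ≤ 2 * ((d : ℝ) - 1) * p := by
          have hd1 : (1:ℝ) ≤ d := by exact_mod_cast hd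
          have : (0:ℝ) ≤ (p : ℝ) := by positivity
          nlinarith

lemma mem_primesInDyadic {M p : ℕ} :
    p ∈ primesInDyadic M ↔ p ≤ M ∧ p.Prime ∧ (M + 1) / 2 < p := by
  simp [primesInDyadic, Nat.lt_succ_iff]

lemma sq_gt_of_mem {M p : ℕ} (hM : 2 ≤ M) (hp : p ∈ primesInDyadic M) : M < p ^ 2 := by
  obtain ⟨h1, h2, h3⟩ := mem_primesInDyadic.1 hp
  have h2' := h2.two_le
  have : M < 2 * p := by omega
  calc M < 2 * p := this
    _ ≤ p * p := by nlinarith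
    _ = p ^ 2 := (sq p).symm

lemma bad_count (M : ℕ) (hM : 2 ≤ M) (d : ℕ) (k : Fin d → ℤ) (j0 : Fin d) (hj0 : k j0 ≠ 0) :
    (((primesInDyadic M).filter (fun p : ℕ => ∀ j, (p : ℤ) ∣ k j)).card : ℝ) * Real.log M
      ≤ 2 * max 1 (Real.log ((Finset.univ.sup fun j : Fin d => (k j).natAbs : ℕ) : ℝ)) := by
  set B := (primesInDyadic M).filter (fun p : ℕ => ∀ j, (p : ℤ) ∣ k j) with hB
  set K := (Finset.univ.sup fun j : Fin d => (k j).natAbs : ℕ) with hK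
  have hKj : (k j0).natAbs ≤ K :=
    Finset.le_sup (f := fun j : Fin d => (k j).natAbs) (Finset.mem_univ j0)
  have hk0 : 1 ≤ (k j0).natAbs := Int.natAbs_pos.2 hj0
  have hKpos : 1 ≤ K := le_trans hk0 hKj
  have hprime : ∀ p ∈ B, Nat.Prime p := fun p hp =>
    (mem_primesInDyadic.1 (Finset.mem_filter.1 hp).1).2.1
  have hprod : (∏ p ∈ B, p) ∣ (k j0).natAbs := by
    apply Finset.prod_primes_dvd
    · exact fun p hp => (hprime p hp).prime
    · intro p hp
      have := (Finset.mem_filter.1 hp).2 j0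
      exact Int.natAbs_dvd_natAbs.2 (by simpa using this)
  have hprodle : (∏ p ∈ B, p) ≤ K :=
    le_trans (Nat.le_of_dvd (by omega) hprod) hKj
  have hMt : M ^ B.card ≤ K ^ 2 := by
    calc M ^ B.card = ∏ _p ∈ B, M := by rw [Finset.prod_const]
      _ ≤ ∏ p ∈ B, p ^ 2 := by
          apply Finset.prod_le_prod'
          intro p hp
          exact le_of_lt (sq_gt_of_mem hM (Finset.mem_filter.1 hp).1)
      _ = (∏ p ∈ B, p) ^ 2 := by rw [Finset.prod_pow]
      _ ≤ K ^ 2 := Nat.pow_le_pow_left hprodle 2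
  have hcast : ((M : ℝ)) ^ B.card ≤ (K : ℝ) ^ 2 := by exact_mod_cast hMt
  have hlog : (B.card : ℝ) * Real.log M ≤ 2 * Real.log K := by
    have h1 : Real.log ((M : ℝ) ^ B.card) ≤ Real.log ((K : ℝ) ^ 2) :=
      Real.log_le_log (by positivity) hcast
    rwa [Real.log_pow, Real.log_pow, Nat.cast_ofNat] at h1
  calc (B.card : ℝ) * Real.log M ≤ 2 * Real.log K := hlog
    _ ≤ 2 * max 1 (Real.log K) := by
        have := le_max_right (1:ℝ) (Real.log K)
        linarith

lemma arith_final (dR A t L mx N c M S : ℝ) (hd1 : 1 ≤ dR) (hM0 : 0 < M)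
    (hL0 : 0 < L) (hmx1 : 1 ≤ mx) (hc0 : 0 < c) (hc1 : c < 1)
    (hcMAL : c * M ≤ A * L) (hNlow : A * M ^ 2 ≤ 4 * N) (hbad : t * L ≤ 2 * mx)
    (ht0 : 0 ≤ t) (hN0 : 0 ≤ N) (hA0 : 0 ≤ A)
    (hsplit : S ≤ 2 * (dR - 1) * A * M + t * M ^ 2) :
    S ≤ 8 * dR / (c * M) * mx * N := by
  have hcM0 : (0:ℝ) < c * M := by positivity
  have h1 : (0:ℝ) ≤ 2 * c * (dR - 1) := by nlinarith
  have e1 : 2 * (dR - 1) * A * M * (c * M) ≤ 8 * (dR - 1) * mx * N := by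
    have q1 : 2*c*(dR-1) * (A*M^2) ≤ 2*c*(dR-1) * (4*N) :=
      mul_le_mul_of_nonneg_left hNlow h1
    have q2 : (0:ℝ) ≤ (mx - c) * ((dR-1) * N) :=
      mul_nonneg (by linarith) (mul_nonneg (by linarith) hN0)
    nlinarith [q1, q2]
  have e2 : t * M^2 * (c * M) ≤ 8 * mx * N := by
    have s1 : t * M^2 * (c * M) ≤ t * M^2 * (A * L) :=
      mul_le_mul_of_nonneg_left hcMAL (mul_nonneg ht0 (by positivity))
    have s3 : (t * L) * (A * M^2) ≤ (2 * mx) * (4 * N) :=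
      mul_le_mul hbad hNlow (mul_nonneg hA0 (by positivity)) (by linarith)
    linarith [s1, s3]
  rw [show 8 * dR / (c * M) * mx * N = 8 * dR * mx * N / (c * M) by ring,
    le_div_iff₀ hcM0]
  have hfin := mul_le_mul_of_nonneg_right hsplit (le_of_lt hcM0)
  have hexp : (2 * (dR - 1) * A * M + t * M^2) * (c * M)
      = 2 * (dR - 1) * A * M * (c * M) + t * M^2 * (c * M) := by ring
  rw [hexp] at hfin
  linarith [hfin, e1, e2]

lemma key_sum_bound (M : ℕ) (hM : 2 ≤ M) (c : ℝ) (hc0 : 0 < c) (hc1 : c < 1)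
    (hcard : c * M / Real.log M ≤ ((primesInDyadic M).card : ℝ))
    (d : ℕ) (hd : 1 ≤ d) (k : Fin d → ℤ) (hk : k ≠ 0) :
    ∑ p ∈ primesInDyadic M, ‖SS d k p‖
      ≤ 8 * d / (c * M) * max 1 (Real.log ((Finset.univ.sup fun j : Fin d => (k j).natAbs : ℕ) : ℝ))
        * ((∑ p ∈ primesInDyadic M, p ^ 2 : ℕ) : ℝ) := by
  set P := primesInDyadic M with hP
  set B := P.filter (fun p : ℕ => ∀ j, (p : ℤ) ∣ k j) with hB
  set mx := max 1 (Real.log ((Finset.univ.sup fun j : Fin d => (k j).natAbs : ℕ) : ℝ)) with hmx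
  set N := ((∑ p ∈ P, p ^ 2 : ℕ) : ℝ) with hN
  set A := (P.card : ℝ) with hA
  set t := (B.card : ℝ) with ht
  set L := Real.log M with hL
  obtain ⟨j0, hj0⟩ : ∃ j0, k j0 ≠ 0 := by
    by_contra h
    push_neg at h
    exact hk (funext h)
  -- basic positivity
  have hM0 : (0:ℝ) < M := by positivity
  have hL0 : (0:ℝ) < L := Real.log_pos (by exact_mod_cast hM)
  have hmx1 : (1:ℝ) ≤ mx := le_max_left _ _
  have hAge : c * M / L ≤ A := hcard
  have hA0 : (0:ℝ) < A := lt_of_lt_of_le (by positivity) hAge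
  have hcMAL : c * M ≤ A * L := by
    rw [div_le_iff₀ hL0] at hAge
    linarith
  -- N ≥ A * M^2 / 4
  have hNlow : A * (M:ℝ)^2 ≤ 4 * N := by
    have hnat : P.card * M ^ 2 ≤ 4 * ∑ p ∈ P, p ^ 2 := by
      calc P.card * M ^ 2 = ∑ _p ∈ P, M ^ 2 := by rw [Finset.sum_const, smul_eq_mul]
        _ ≤ ∑ p ∈ P, 4 * p ^ 2 := by
            apply Finset.sum_le_sum
            intro p hp
            obtain ⟨h1, h2, h3⟩ := mem_primesInDyadic.1 hp
            have : M < 2 * p := by omega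
            nlinarith
        _ = 4 * ∑ p ∈ P, p ^ 2 := by rw [Finset.mul_sum]
    rw [hA, hN]
    exact_mod_cast hnat
  -- bad count
  have hbad : t * L ≤ 2 * mx := bad_count M hM d k j0 hj0
  have ht0 : (0:ℝ) ≤ t := by positivity
  -- split the sum
  have hsplit : ∑ p ∈ P, ‖SS d k p‖
      ≤ 2 * ((d:ℝ) - 1) * A * M + t * (M:ℝ)^2 := by
    rw [← Finset.sum_filter_add_sum_filter_not P (fun p : ℕ => ∀ j, (p : ℤ) ∣ k j)]
    have h1 : ∑ p ∈ B, ‖SS d k p‖ ≤ t * (M:ℝ)^2 := by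
      calc ∑ p ∈ B, ‖SS d k p‖ ≤ ∑ p ∈ B, (M:ℝ)^2 := by
            apply Finset.sum_le_sum
            intro p hp
            refine le_trans (abs_SS_le_trivial d k p) ?_
            have hpM : p ≤ M := (mem_primesInDyadic.1 (Finset.mem_filter.1 hp).1).1
            have : (p:ℝ) ≤ M := by exact_mod_cast hpM
            nlinarith [show (0:ℝ) ≤ p by positivity]
        _ = t * (M:ℝ)^2 := by rw [Finset.sum_const, nsmul_eq_mul]
    have h2 : ∑ p ∈ P.filter (fun p : ℕ => ¬ ∀ j, (p : ℤ) ∣ k j), ‖SS d k p‖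
        ≤ 2 * ((d:ℝ) - 1) * A * M := by
      calc ∑ p ∈ P.filter (fun p : ℕ => ¬ ∀ j, (p : ℤ) ∣ k j), ‖SS d k p‖
          ≤ ∑ p ∈ P.filter (fun p : ℕ => ¬ ∀ j, (p : ℤ) ∣ k j), 2 * ((d:ℝ) - 1) * M := by
            apply Finset.sum_le_sum
            intro p hp
            rw [Finset.mem_filter] at hp
            obtain ⟨hpP, hpk⟩ := hp
            push_neg at hpk
            have hprime : p.Prime := (mem_primesInDyadic.1 hpP).2.1
            refine le_trans (abs_SS_le_nonbad d hd k p hprime hpk) ?_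
            have hpM : (p:ℝ) ≤ M := by exact_mod_cast (mem_primesInDyadic.1 hpP).1
            have hd1 : (1:ℝ) ≤ d := by exact_mod_cast hd
            nlinarith
        _ ≤ 2 * ((d:ℝ) - 1) * A * M := by
            rw [Finset.sum_const, nsmul_eq_mul]
            have hcle : ((P.filter (fun p : ℕ => ¬ ∀ j, (p : ℤ) ∣ k j)).card : ℝ) ≤ A := by
              rw [hA]
              exact_mod_cast Finset.card_le_card
                (Finset.filter_subset (fun p : ℕ => ¬ ∀ j, (p : ℤ) ∣ k j) P)
            have hd1 : (1:ℝ) ≤ d := by exact_mod_cast hd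
            have hnn : (0:ℝ) ≤ 2 * ((d:ℝ) - 1) * M := by
              have : (0:ℝ) ≤ (M:ℝ) := le_of_lt hM0
              nlinarith
            calc ((P.filter (fun p : ℕ => ¬ ∀ j, (p : ℤ) ∣ k j)).card : ℝ) * (2 * ((d:ℝ)-1) * M)
                ≤ A * (2 * ((d:ℝ)-1) * M) := mul_le_mul_of_nonneg_right hcle hnn
              _ = 2 * ((d:ℝ) - 1) * A * M := by ring
    linarith
  exact arith_final (d:ℝ) A t L mx N c (M:ℝ) _ (by exact_mod_cast hd) hM0 hL0 hmx1 hc0 hc1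
    hcMAL hNlow hbad ht0 (by positivity) (by positivity) hsplit

/-- Let `M ≥ 2`, `c ∈ (0,1)` with `|𝑃_M| ≥ c·M/log M`, `d ≥ 1`, and let
`f` be given by an absolutely convergent Fourier series with coefficients `coef` whose
weighted norm `‖f‖ = ∑_{k∈ℤᵈ} |coef k| max(1, log|k|_∞)` is finite. Then the QMC rule
based on the composite Korobov point set `T_{M,d}^comp` satisfies
`|coef 0 − (1/N_T) ∑_{p∈𝑃_M} ∑_{n=0}^{p²-1} f(x̃ₙ⁽ᵖ⁾)| ≤ (8d/(cM))·‖f‖`, and consequently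
(since `N_T ≤ M³`) the error is at most `(8d/(c·N_T^{1/3}))·‖f‖`. -/
theorem composite_korobov_T_worst_case_error (M : ℕ) (hM : 2 ≤ M)
    (c : ℝ) (hc0 : 0 < c) (hc1 : c < 1)
    (hcard : c * M / Real.log M ≤ ((primesInDyadic M).card : ℝ))
    (d : ℕ) (hd : 1 ≤ d)
    (f : (Fin d → ℝ) → ℂ) (coef : (Fin d → ℤ) → ℂ)
    (hnorm : Summable fun k : Fin d → ℤ =>
      ‖coef k‖ *
        max 1 (Real.log ((Finset.univ.sup fun j : Fin d => (k j).natAbs : ℕ) : ℝ)))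
    (hf : ∀ x : Fin d → ℝ, f x = ∑' k : Fin d → ℤ,
      coef k * Complex.exp (2 * Real.pi * Complex.I * ∑ j : Fin d, (k j : ℂ) * (x j : ℂ))) :
    ‖coef 0 - (1 / ((∑ p ∈ primesInDyadic M, p ^ 2 : ℕ) : ℂ)) *
        ∑ p ∈ primesInDyadic M, ∑ n ∈ Finset.range (p ^ 2),
          f (fun j : Fin d => Int.fract ((n : ℝ) ^ ((j : ℕ) + 1) / (p ^ 2 : ℕ)))‖ ≤
      8 * d / (c * M) *
        (∑' k : Fin d → ℤ, ‖coef k‖ *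
          max 1 (Real.log ((Finset.univ.sup fun j : Fin d => (k j).natAbs : ℕ) : ℝ))) ∧
    ‖coef 0 - (1 / ((∑ p ∈ primesInDyadic M, p ^ 2 : ℕ) : ℂ)) *
        ∑ p ∈ primesInDyadic M, ∑ n ∈ Finset.range (p ^ 2),
          f (fun j : Fin d => Int.fract ((n : ℝ) ^ ((j : ℕ) + 1) / (p ^ 2 : ℕ)))‖ ≤
      8 * d / (c * ((∑ p ∈ primesInDyadic M, p ^ 2 : ℕ) : ℝ) ^ ((1 : ℝ) / 3)) *
        (∑' k : Fin d → ℤ, ‖coef k‖ *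
          max 1 (Real.log ((Finset.univ.sup fun j : Fin d => (k j).natAbs : ℕ) : ℝ))) := by
  classical
  set P := primesInDyadic M with hP
  set NN : ℕ := ∑ p ∈ P, p ^ 2 with hNN
  set w : (Fin d → ℤ) → ℝ :=
    fun k => max 1 (Real.log ((Finset.univ.sup fun j : Fin d => (k j).natAbs : ℕ) : ℝ)) with hw
  -- weights ≥ 1, summability of |coef|
  have hw1 : ∀ k, 1 ≤ w k := fun k => le_max_left _ _
  have habs_nonneg : ∀ k : Fin d → ℤ, 0 ≤ ‖coef k‖ := fun k => norm_nonneg _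
  have hsum : Summable fun k : Fin d → ℤ => ‖coef k‖ :=
    hnorm.of_nonneg_of_le habs_nonneg
      (fun k => le_mul_of_one_le_right (habs_nonneg k) (hw1 k))
  -- positivity of the point count
  have hlogM : (0:ℝ) < Real.log M := Real.log_pos (by exact_mod_cast hM)
  have hPne : P.Nonempty := by
    rw [← Finset.card_pos]
    by_contra h
    push_neg at h
    interval_cases hc : P.card
    have : 0 < c * M / Real.log M := by positivity
    norm_num at hcard
    linarith
  have hNpos : 0 < NN := by
    rw [hNN]
    apply Finset.sum_pos _ hPne
    intro p hp
    have := (mem_primesInDyadic.1 hp).2.1.two_le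
    positivity
  have hNR : (0:ℝ) < (NN : ℝ) := by exact_mod_cast hNpos
  have hNC : ((NN : ℕ) : ℂ) ≠ 0 := by exact_mod_cast hNpos.ne'
  -- node identity
  have hnode : ∀ p ∈ P, ∀ n : ℕ,
      f (fun j : Fin d => Int.fract ((n : ℝ) ^ ((j : ℕ) + 1) / (p ^ 2 : ℕ)))
        = ∑' k : Fin d → ℤ, coef k * ee ((gg d k n : ℝ) / ((p ^ 2 : ℕ) : ℝ)) := by
    intro p hp n
    rw [hf]
    refine tsum_congr fun k => ?_
    congr 1
    set x : Fin d → ℝ := fun j => Int.fract ((n : ℝ) ^ ((j : ℕ) + 1) / (p ^ 2 : ℕ)) with hx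
    have h1 : Complex.exp (2 * Real.pi * Complex.I * ∑ j : Fin d, (k j : ℂ) * (x j : ℂ))
        = ee (∑ j : Fin d, (k j : ℝ) * x j) := by
      rw [ee]
      congr 1
      push_cast
      ring
    rw [h1]
    set m : ℤ := ∑ j : Fin d, k j * ⌊(n : ℝ) ^ ((j : ℕ) + 1) / ((p ^ 2 : ℕ) : ℝ)⌋ with hm
    have hterm : ∀ j : Fin d, (k j : ℝ) * x j
        = (k j : ℝ) * ((n:ℝ) ^ ((j:ℕ)+1) / ((p^2:ℕ):ℝ))
          - (k j : ℝ) * ((⌊(n : ℝ) ^ ((j : ℕ) + 1) / ((p ^ 2 : ℕ) : ℝ)⌋ : ℤ) : ℝ) := by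
      intro j
      rw [hx]
      dsimp only
      rw [← Int.self_sub_floor]
      ring
    have h2 : ∑ j : Fin d, (k j : ℝ) * x j
        = ((-m : ℤ) : ℝ) + (gg d k n : ℝ) / ((p ^ 2 : ℕ) : ℝ) := by
      rw [Finset.sum_congr rfl (fun j _ => hterm j), Finset.sum_sub_distrib, hm, gg]
      push_cast
      rw [Finset.sum_div]
      simp only [mul_div_assoc]
      ring
    rw [h2, ee_int_add]
  -- summability of individual Fourier series
  have hFsummable : ∀ (p n : ℕ), Summable
      (fun k : Fin d → ℤ => coef k * ee ((gg d k n : ℝ) / ((p^2:ℕ):ℝ))) := by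
    intro p n
    apply Summable.of_norm
    refine hsum.of_nonneg_of_le (fun k => norm_nonneg _) fun k => ?_
    rw [norm_mul, abs_ee, mul_one]
  have hswap1 : ∀ p ∈ P, ∑ n ∈ Finset.range (p^2),
      (∑' k : Fin d → ℤ, coef k * ee ((gg d k n : ℝ) / ((p^2:ℕ):ℝ)))
      = ∑' k : Fin d → ℤ, coef k * SS d k p := by
    intro p hp
    rw [← Summable.tsum_finsetSum (fun n _ => hFsummable p n)]
    refine tsum_congr fun k => ?_
    rw [SS, Finset.mul_sum]
  have hSS_abs : ∀ (p : ℕ) (k : Fin d → ℤ), ‖SS d k p‖ ≤ ((p^2:ℕ):ℝ) := by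
    intro p k
    have h := abs_SS_le_trivial d k p
    refine le_trans h (le_of_eq ?_)
    push_cast
    ring
  have hsumSS : ∀ p : ℕ, Summable (fun k : Fin d → ℤ => coef k * SS d k p) := by
    intro p
    apply Summable.of_norm
    refine Summable.of_nonneg_of_le (fun k => norm_nonneg _) (fun k => ?_)
      (hsum.mul_right ((p^2:ℕ):ℝ))
    rw [norm_mul]
    exact mul_le_mul_of_nonneg_left (hSS_abs p k) (habs_nonneg k)
  set TT : (Fin d → ℤ) → ℂ := fun k => ∑ p ∈ P, SS d k p with hTT
  have hdouble : ∑ p ∈ P, ∑ n ∈ Finset.range (p^2),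
      f (fun j : Fin d => Int.fract ((n : ℝ) ^ ((j : ℕ) + 1) / (p ^ 2 : ℕ)))
      = ∑' k : Fin d → ℤ, coef k * TT k := by
    rw [Finset.sum_congr rfl (fun p hp => by
      rw [Finset.sum_congr rfl (fun n _ => hnode p hp n), hswap1 p hp])]
    rw [← Summable.tsum_finsetSum (fun p _ => hsumSS p)]
    refine tsum_congr fun k => ?_
    rw [hTT, Finset.mul_sum]
  have hTT0 : TT 0 = (NN : ℂ) := by
    rw [hTT, hNN]
    push_cast
    refine Finset.sum_congr rfl fun p hp => ?_
    rw [SS]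
    have h1 : ∀ n ∈ Finset.range (p^2), ee ((gg d (0 : Fin d → ℤ) n : ℝ) / ((p^2:ℕ):ℝ)) = 1 := by
      intro n _
      have : gg d (0 : Fin d → ℤ) n = 0 := by simp [gg]
      rw [this]
      simp [ee]
    rw [Finset.sum_congr rfl h1, Finset.sum_const, Finset.card_range]
    push_cast
    ring
  have hTTabs : ∀ k, ‖TT k‖ ≤ (NN : ℝ) := by
    intro k
    refine le_trans (norm_sum_le _ _) ?_
    rw [hNN]
    push_cast
    exact Finset.sum_le_sum fun p _ => by
      refine le_trans (hSS_abs p k) (le_of_eq ?_)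
      push_cast; ring
  -- summabilities for the error rearrangement
  have hsum_ite : Summable (fun k : Fin d → ℤ => if k = 0 then coef 0 else 0) :=
    summable_of_ne_finset_zero (s := {0}) (fun k hk => if_neg (by simpa using hk))
  have hsumTTprod : Summable (fun k : Fin d → ℤ => coef k * TT k) := by
    apply Summable.of_norm
    refine Summable.of_nonneg_of_le (fun k => norm_nonneg _) (fun k => ?_)
      (hsum.mul_right ((NN:ℕ):ℝ))
    rw [norm_mul]
    exact mul_le_mul_of_nonneg_left (hTTabs k) (habs_nonneg k)
  have hsum_f2 : Summable (fun k : Fin d → ℤ => (1/(NN:ℂ)) * (coef k * TT k)) :=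
    hsumTTprod.mul_left _
  have hEE : coef 0 - (1 / (NN : ℂ)) * ∑' k : Fin d → ℤ, coef k * TT k
      = ∑' k : Fin d → ℤ,
          ((if k = 0 then coef 0 else 0) - (1 / (NN:ℂ)) * (coef k * TT k)) := by
    rw [Summable.tsum_sub hsum_ite hsum_f2, tsum_mul_left]
    congr 1
    exact (tsum_ite_eq (0 : Fin d → ℤ) (fun _ => coef 0)).symm
  -- pointwise bound
  have hB0 : (0:ℝ) ≤ 8 * d / (c * M) := by positivity
  have hptwise : ∀ k : Fin d → ℤ,
      ‖(if k = 0 then coef 0 else 0) - (1/(NN:ℂ)) * (coef k * TT k)‖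
      ≤ 8 * d / (c * M) * (‖coef k‖ * w k) := by
    intro k
    by_cases hk : k = 0
    · subst hk
      rw [if_pos rfl, hTT0]
      have hz : coef 0 - (1/(NN:ℂ)) * (coef 0 * (NN:ℂ)) = 0 := by
        field_simp
        ring
      rw [hz, norm_zero]
      exact mul_nonneg hB0 (mul_nonneg (habs_nonneg 0) (le_trans zero_le_one (hw1 0)))
    · rw [if_neg hk, zero_sub, norm_neg, norm_mul, norm_mul]
      have habs1 : ‖1/(NN:ℂ)‖ = 1/(NN:ℝ) := by
        rw [norm_div, norm_one]
        congr 1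
        exact Complex.norm_natCast NN
      rw [habs1]
      have h1 : ‖TT k‖ ≤ 8 * d / (c*M) * w k * (NN:ℝ) :=
        le_trans (norm_sum_le _ _) (key_sum_bound M hM c hc0 hc1 hcard d hd k hk)
      calc (1/(NN:ℝ)) * (‖coef k‖ * ‖TT k‖)
          ≤ (1/(NN:ℝ)) * (‖coef k‖ * (8 * d / (c*M) * w k * (NN:ℝ))) := by
            apply mul_le_mul_of_nonneg_left _ (by positivity)
            exact mul_le_mul_of_nonneg_left h1 (habs_nonneg k)
        _ = 8 * d / (c * M) * (‖coef k‖ * w k) := by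
            field_simp
  -- summability of the two sides of the final comparison
  have hsumRHS : Summable (fun k : Fin d → ℤ =>
      8 * d / (c * M) * (‖coef k‖ * w k)) := hnorm.mul_left _
  have hsumD : Summable (fun k : Fin d → ℤ =>
      ‖(if k = 0 then coef 0 else 0) - (1/(NN:ℂ)) * (coef k * TT k)‖) :=
    hsumRHS.of_nonneg_of_le (fun k => norm_nonneg _) hptwise
  -- main bound
  have hmain : ‖coef 0 - (1 / ((NN : ℕ) : ℂ)) *
      ∑ p ∈ P, ∑ n ∈ Finset.range (p ^ 2),
        f (fun j : Fin d => Int.fract ((n : ℝ) ^ ((j : ℕ) + 1) / (p ^ 2 : ℕ)))‖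
      ≤ 8 * d / (c * M) * (∑' k : Fin d → ℤ, ‖coef k‖ * w k) := by
    rw [hdouble, hEE]
    calc ‖∑' k : Fin d → ℤ,
          ((if k = 0 then coef 0 else 0) - (1/(NN:ℂ)) * (coef k * TT k))‖
        ≤ ∑' k : Fin d → ℤ, ‖(if k = 0 then coef 0 else 0) - (1/(NN:ℂ)) * (coef k * TT k)‖ := by
          have := norm_tsum_le_tsum_norm (f := fun k : Fin d → ℤ =>
            ((if k = 0 then coef 0 else 0) - (1/(NN:ℂ)) * (coef k * TT k))) ?_
          · simpa using this
          · simpa using hsumD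
      _ ≤ ∑' k : Fin d → ℤ, 8 * d / (c * M) * (‖coef k‖ * w k) :=
          Summable.tsum_le_tsum hptwise hsumD hsumRHS
      _ = 8 * d / (c * M) * (∑' k : Fin d → ℤ, ‖coef k‖ * w k) := tsum_mul_left
  -- N ≤ M^3 and rpow comparison
  have hNM3 : (NN : ℝ) ≤ (M:ℝ)^3 := by
    have hnat : NN ≤ M^3 := by
      rw [hNN]
      calc ∑ p ∈ P, p^2 ≤ ∑ _p ∈ P, M^2 := Finset.sum_le_sum fun p hp => by
            have := (mem_primesInDyadic.1 hp).1
            exact Nat.pow_le_pow_left this 2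
        _ = P.card * M^2 := by rw [Finset.sum_const, smul_eq_mul]
        _ ≤ M * M^2 := by
            apply Nat.mul_le_mul_right
            calc P.card ≤ (Finset.Icc 1 M).card := Finset.card_le_card (fun p hp => by
                have h := mem_primesInDyadic.1 hp
                exact Finset.mem_Icc.2 ⟨h.2.1.pos, h.1⟩)
              _ = M := by rw [Nat.card_Icc]; omega
        _ = M^3 := by ring
    exact_mod_cast hnat
  have hrpow : ((NN:ℝ)) ^ ((1:ℝ)/3) ≤ (M:ℝ) := by
    have hM0 : (0:ℝ) ≤ (M:ℝ) := by positivity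
    have h3 : ((M:ℝ)^3) ^ ((1:ℝ)/3) = (M:ℝ) := by
      rw [← Real.rpow_natCast (M:ℝ) 3, ← Real.rpow_mul hM0]
      norm_num
    calc (NN:ℝ)^((1:ℝ)/3) ≤ ((M:ℝ)^3)^((1:ℝ)/3) :=
          Real.rpow_le_rpow (le_of_lt hNR) hNM3 (by norm_num)
      _ = (M:ℝ) := h3
  have hrpow0 : (0:ℝ) < (NN:ℝ) ^ ((1:ℝ)/3) := Real.rpow_pos_of_pos hNR _
  have hfrac : 8 * (d:ℝ) / (c * M) ≤ 8 * d / (c * (NN:ℝ)^((1:ℝ)/3)) := by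
    apply div_le_div_of_nonneg_left (by positivity) (by positivity) ?_
    exact mul_le_mul_of_nonneg_left hrpow (le_of_lt hc0)
  have htsum_nonneg : (0:ℝ) ≤ ∑' k : Fin d → ℤ, ‖coef k‖ * w k :=
    tsum_nonneg fun k => mul_nonneg (habs_nonneg k) (le_trans zero_le_one (hw1 k))
  exact ⟨hmain, le_trans hmain (mul_le_mul_of_nonneg_right hfrac htsum_nonneg)⟩
end
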